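/- Let $G$ be a connected weighted graph, and $C, D \subseteq V(G)$ disjoint nonempty sets. Let $I := \mathtt{Schur}(G, C \cup D)$ and let $G/(C,D)$ be the graph obtained by contracting $C$ to a single vertex $c$ and $D$ to a single vertex $d$. Then $c^I(C, D) = \frac{1}{\chi_{cd}^T L_{G/(C,D)}^{\dagger} \chi_{cd}}$, i.e., the total weight of edges between $C$ and $D$ in the Schur complement equals the reciprocal of the effective resistance between the contracted vertices $c$ and $d$. -/
import Mathlib

open Matrix MeasureTheory
open scoped Classical

/-- The (weighted) Laplacian matrix of the weighted graph on `V` with weights `c`. -/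
noncomputable def lapl {V : Type*} [Fintype V] [DecidableEq V] (c : V → V → ℝ) :
    Matrix V V ℝ :=
  fun u v => if u = v then ∑ w, c u w else -c u v

/-- The graph described by `L` is connected: the kernel of `L` consists of constants. -/
def LapConnected {V : Type*} [Fintype V] (L : Matrix V V ℝ) : Prop :=
  ∀ x : V → ℝ, L *ᵥ x = 0 → ∃ k : ℝ, ∀ v, x v = k

/-- The Schur complement of `L` onto the rows and columns indexed by `S`,
eliminating the vertices outside of `S`. -/
noncomputable def schur {V : Type*} [Fintype V] [DecidableEq V]
    (L : Matrix V V ℝ) (S : Set V) : Matrix S S ℝ :=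
  (Matrix.of fun i j : S => L i.1 j.1)
    - (Matrix.of fun (i : S) (j : {v : V // v ∉ S}) => L i.1 j.1)
        * (Matrix.of fun i j : {v : V // v ∉ S} => L i.1 j.1)⁻¹
        * (Matrix.of fun (i : {v : V // v ∉ S}) (j : S) => L i.1 j.1)

/-- `B` is the Moore–Penrose pseudoinverse of `A`. -/
def IsMPInv {n : Type*} [Fintype n] (A B : Matrix n n ℝ) : Prop :=
  A * B * A = A ∧ B * A * B = B ∧ (A * B)ᵀ = A * B ∧ (B * A)ᵀ = B * A

/-- The vertex map contracting `C` to the vertex `Sum.inr false` and `D` to the vertex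
`Sum.inr true`, leaving all other vertices untouched. -/
noncomputable def contractMap {V : Type*} (C D : Set V) (v : V) :
    ({v : V // v ∉ C ∪ D}) ⊕ Bool :=
  if hC : v ∈ C then Sum.inr false
  else if hD : v ∈ D then Sum.inr true
  else Sum.inl ⟨v, by simp [Set.mem_union, hC, hD]⟩

/-- The Laplacian of the graph `G/(C,D)` obtained by contracting `C` to a single
vertex and `D` to a single vertex: `L_{G/(C,D)} = F L Fᵀ` where `F` is the 0/1
matrix of the contraction map. -/
noncomputable def contractLapl {V : Type*} [Fintype V] [DecidableEq V]
    (c : V → V → ℝ) (C D : Set V) :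
    Matrix (({v : V // v ∉ C ∪ D}) ⊕ Bool) (({v : V // v ∉ C ∪ D}) ⊕ Bool) ℝ :=
  (Matrix.of fun a u => if contractMap C D u = a then (1 : ℝ) else 0) * lapl c *
    (Matrix.of fun a u => if contractMap C D u = a then (1 : ℝ) else 0)ᵀ

section helper
variable {V : Type*} [Fintype V] [DecidableEq V]

lemma lapl_apply' (c : V → V → ℝ) (hdiag : ∀ v, c v v = 0) (u v : V) :
    lapl c u v = (if u = v then ∑ w, c u w else 0) - c u v := by
  by_cases h : u = v
  · subst h; simp [lapl, hdiag]
  · simp [lapl, h]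

lemma lapl_rowsum (c : V → V → ℝ) (hdiag : ∀ v, c v v = 0) (u : V) :
    ∑ v, lapl c u v = 0 := by
  simp [lapl_apply' c hdiag, Finset.sum_sub_distrib, Finset.sum_ite_eq]

lemma lapl_mulVec (c : V → V → ℝ) (hdiag : ∀ v, c v v = 0) (x : V → ℝ) (u : V) :
    (lapl c *ᵥ x) u = ∑ v, c u v * (x u - x v) := by
  simp only [Matrix.mulVec, dotProduct, lapl_apply' c hdiag, sub_mul, ite_mul, zero_mul,
    Finset.sum_sub_distrib, Finset.sum_ite_eq, Finset.mem_univ, if_true]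
  rw [Finset.sum_mul]
  rw [← Finset.sum_sub_distrib]
  exact Finset.sum_congr rfl fun v _ => by ring

lemma lapl_quad (c : V → V → ℝ) (hsymm : ∀ u v, c u v = c v u) (hdiag : ∀ v, c v v = 0)
    (x : V → ℝ) :
    2 * (x ⬝ᵥ (lapl c *ᵥ x)) = ∑ u, ∑ v, c u v * (x u - x v)^2 := by
  have claim1 : x ⬝ᵥ (lapl c *ᵥ x)
      = (∑ u, ∑ v, c u v * x u * x u) - ∑ u, ∑ v, c u v * x u * x v := by
    simp only [dotProduct, lapl_mulVec c hdiag x]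
    rw [← Finset.sum_sub_distrib]
    refine Finset.sum_congr rfl fun u _ => ?_
    rw [Finset.mul_sum, ← Finset.sum_sub_distrib]
    exact Finset.sum_congr rfl fun v _ => by ring
  have swap : ∑ u, ∑ v, c u v * x v * x v = ∑ u, ∑ v, c u v * x u * x u := by
    rw [Finset.sum_comm]
    exact Finset.sum_congr rfl fun u _ => Finset.sum_congr rfl fun v _ => by rw [hsymm]
  have expand : ∑ u, ∑ v, c u v * (x u - x v)^2
      = ((∑ u, ∑ v, c u v * x u * x u) - 2 * ∑ u, ∑ v, c u v * x u * x v)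
        + ∑ u, ∑ v, c u v * x v * x v := by
    rw [Finset.mul_sum, ← Finset.sum_sub_distrib, ← Finset.sum_add_distrib]
    refine Finset.sum_congr rfl fun u _ => ?_
    rw [Finset.mul_sum, ← Finset.sum_sub_distrib, ← Finset.sum_add_distrib]
    exact Finset.sum_congr rfl fun v _ => by ring
  rw [claim1, expand, swap]; ring

lemma lapl_kernel_of_quad (c : V → V → ℝ) (hsymm : ∀ u v, c u v = c v u)
    (hnonneg : ∀ u v, 0 ≤ c u v) (hdiag : ∀ v, c v v = 0) (x : V → ℝ)
    (h : x ⬝ᵥ (lapl c *ᵥ x) = 0) : lapl c *ᵥ x = 0 := by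
  have h2 : ∑ u, ∑ v, c u v * (x u - x v)^2 = 0 := by
    rw [← lapl_quad c hsymm hdiag, h, mul_zero]
  have hnn : ∀ u v, (0:ℝ) ≤ c u v * (x u - x v)^2 := fun u v =>
    mul_nonneg (hnonneg u v) (sq_nonneg _)
  have h3 : ∀ u v, c u v * (x u - x v)^2 = 0 := by
    intro u v
    have houter := (Finset.sum_eq_zero_iff_of_nonneg
      (fun u _ => Finset.sum_nonneg fun v _ => hnn u v)).1 h2 u (Finset.mem_univ u)
    exact (Finset.sum_eq_zero_iff_of_nonneg (fun v _ => hnn u v)).1 houter v (Finset.mem_univ v)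
  funext u
  rw [lapl_mulVec c hdiag x u]
  refine Finset.sum_eq_zero fun v _ => ?_
  rcases mul_eq_zero.1 (h3 u v) with h | h
  · rw [h, zero_mul]
  · rw [pow_eq_zero_iff (two_ne_zero), sub_eq_zero] at h
    rw [h, sub_self, mul_zero]

omit [Fintype V] [DecidableEq V] in
lemma sum_split (S : Set V) [Fintype V] [Fintype ↥S] [Fintype {v : V // v ∉ S}] (f : V → ℝ) :
    ∑ v, f v = (∑ j : S, f j.1) + ∑ k : {v : V // v ∉ S}, f k.1 := by
  rw [← (Equiv.sumCompl (· ∈ S)).sum_comp f, Fintype.sum_sum_type]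
  rfl

end helper

section cm
variable {V : Type*} {C D : Set V}

lemma cm_of_mem_C {u : V} (h : u ∈ C) : contractMap C D u = Sum.inr false := dif_pos h

lemma cm_of_mem_D {u : V} (hu : u ∉ C) (h : u ∈ D) : contractMap C D u = Sum.inr true := by
  unfold contractMap; rw [dif_neg hu, dif_pos h]

lemma cm_of_notMem {u : V} (h : u ∉ C ∪ D) : contractMap C D u = Sum.inl ⟨u, h⟩ := by
  have h1 : u ∉ C := fun hc => h (Set.mem_union_left _ hc)
  have h2 : u ∉ D := fun hc => h (Set.mem_union_right _ hc)
  unfold contractMap; rw [dif_neg h1, dif_neg h2]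

lemma cm_eq_inl_iff {u : V} {i : {v : V // v ∉ C ∪ D}} :
    contractMap C D u = Sum.inl i ↔ u = i.1 := by
  constructor
  · intro h
    by_cases h1 : u ∈ C
    · rw [cm_of_mem_C h1] at h; cases h
    by_cases h2 : u ∈ D
    · rw [cm_of_mem_D h1 h2] at h; cases h
    · have h3 : u ∉ C ∪ D := fun hc => hc.elim h1 h2
      rw [cm_of_notMem h3] at h
      exact congrArg Subtype.val (Sum.inl.inj h)
  · rintro rfl
    exact cm_of_notMem i.2

lemma cm_eq_false_iff {u : V} : contractMap C D u = Sum.inr false ↔ u ∈ C := by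
  constructor
  · intro h
    by_cases h1 : u ∈ C
    · exact h1
    by_cases h2 : u ∈ D
    · rw [cm_of_mem_D h1 h2] at h; simp at h
    · rw [cm_of_notMem (fun hc => hc.elim h1 h2)] at h; simp at h
  · exact cm_of_mem_C

end cm

section clapl
variable {V : Type*} [Fintype V] [DecidableEq V]

lemma Ft_mulVec (C D : Set V) (z : ({v : V // v ∉ C ∪ D}) ⊕ Bool → ℝ) :
    (Matrix.of fun a u => if contractMap C D u = a then (1 : ℝ) else 0)ᵀ *ᵥ z
      = fun v => z (contractMap C D v) := by
  funext v
  simp [Matrix.mulVec, dotProduct, Matrix.transpose_apply, ite_mul]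

lemma contractLapl_mulVec (c : V → V → ℝ) (C D : Set V)
    (z : ({v : V // v ∉ C ∪ D}) ⊕ Bool → ℝ) :
    contractLapl c C D *ᵥ z
      = (Matrix.of fun a u => if contractMap C D u = a then (1 : ℝ) else 0) *ᵥ
          (lapl c *ᵥ (fun v => z (contractMap C D v))) := by
  unfold contractLapl
  rw [← Matrix.mulVec_mulVec, ← Matrix.mulVec_mulVec, Ft_mulVec]

lemma contractLapl_dot (c : V → V → ℝ) (C D : Set V)
    (z : ({v : V // v ∉ C ∪ D}) ⊕ Bool → ℝ) :
    z ⬝ᵥ (contractLapl c C D *ᵥ z)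
      = (fun v => z (contractMap C D v)) ⬝ᵥ (lapl c *ᵥ (fun v => z (contractMap C D v))) := by
  rw [contractLapl_mulVec, Matrix.dotProduct_mulVec, ← Matrix.mulVec_transpose, Ft_mulVec]

end clapl

/-- The total weight of edges between `C` and `D` in the Schur complement of `G`
onto `C ∪ D` equals the reciprocal of the effective resistance between the two
contracted vertices of `G/(C,D)`. -/
theorem schur_weight_eq_inv_reff {V : Type*} [Fintype V] [DecidableEq V]
    (c : V → V → ℝ) (hsymm : ∀ u v, c u v = c v u) (hnonneg : ∀ u v, 0 ≤ c u v)
    (hdiag : ∀ v, c v v = 0) (hconn : LapConnected (lapl c))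
    (C D : Set V) (hd : Disjoint C D) (hC : C.Nonempty) (hD : D.Nonempty)
    (M : Matrix (({v : V // v ∉ C ∪ D}) ⊕ Bool) (({v : V // v ∉ C ∪ D}) ⊕ Bool) ℝ)
    (hM : IsMPInv (contractLapl c C D) M)
    (chi : ({v : V // v ∉ C ∪ D}) ⊕ Bool → ℝ)
    (hchi : chi = fun a => (if a = Sum.inr false then (1 : ℝ) else 0) -
        if a = Sum.inr true then 1 else 0) :
    (∑ i : ↥(C ∪ D), ∑ j : ↥(C ∪ D),
        if i.1 ∈ C ∧ j.1 ∈ D then -(schur (lapl c) (C ∪ D) i j) else 0)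
      = (chi ⬝ᵥ (M *ᵥ chi))⁻¹ := by
  classical
  set A : Matrix {v : V // v ∉ C ∪ D} {v : V // v ∉ C ∪ D} ℝ :=
    Matrix.of fun i j => lapl c i.1 j.1 with hAdef
  have hkernel : ∀ x : V → ℝ, x ⬝ᵥ (lapl c *ᵥ x) = 0 → ∃ k, ∀ v, x v = k :=
    fun x hx => hconn x (lapl_kernel_of_quad c hsymm hnonneg hdiag x hx)
  -- A is invertible
  have hdetA : A.det ≠ 0 := by
    intro h0
    obtain ⟨vv, hvne, hv0⟩ := Matrix.exists_mulVec_eq_zero_iff.2 h0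
    set xx : V → ℝ := fun u => if h : u ∈ C ∪ D then 0 else vv ⟨u, h⟩ with hxxdef
    have hxxU : ∀ j : ↥(C ∪ D), xx j.1 = 0 := fun j => dif_pos j.2
    have hxxW : ∀ k : {v : V // v ∉ C ∪ D}, xx k.1 = vv k := fun k => dif_neg k.2
    have hinner : ∀ k : {v : V // v ∉ C ∪ D}, (lapl c *ᵥ xx) k.1 = 0 := by
      intro k
      have e0 : (lapl c *ᵥ xx) k.1 = ∑ v, lapl c k.1 v * xx v := rfl
      rw [e0, sum_split (C ∪ D)]
      beta_reduce
      have h1 : ∑ j : ↥(C ∪ D), lapl c k.1 j.1 * xx j.1 = 0 :=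
        Finset.sum_eq_zero fun j _ => by rw [hxxU j, mul_zero]
      have h2 : ∑ l : {v : V // v ∉ C ∪ D}, lapl c k.1 l.1 * xx l.1 = (A *ᵥ vv) k :=
        Finset.sum_congr rfl fun l _ => by rw [hxxW l]; rfl
      rw [h1, h2, hv0, zero_add]
      rfl
    have hquad : xx ⬝ᵥ (lapl c *ᵥ xx) = 0 := by
      have e0 : xx ⬝ᵥ (lapl c *ᵥ xx) = ∑ v, xx v * (lapl c *ᵥ xx) v := rfl
      rw [e0, sum_split (C ∪ D)]
      beta_reduce
      have h1 : ∑ j : ↥(C ∪ D), xx j.1 * (lapl c *ᵥ xx) j.1 = 0 :=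
        Finset.sum_eq_zero fun j _ => by rw [hxxU j, zero_mul]
      have h2 : ∑ k : {v : V // v ∉ C ∪ D}, xx k.1 * (lapl c *ᵥ xx) k.1 = 0 :=
        Finset.sum_eq_zero fun k _ => by rw [hinner k, mul_zero]
      rw [h1, h2, add_zero]
    obtain ⟨k0, hk0⟩ := hkernel xx hquad
    obtain ⟨c0, hc0⟩ := hC
    have hk00 : k0 = 0 := by
      rw [← hk0 c0]
      exact dif_pos (Set.mem_union_left _ hc0)
    apply hvne
    funext i
    have h5 := hk0 i.1
    rw [hxxW i] at h5
    rw [h5, hk00]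
    rfl
  have hAl : A⁻¹ * A = 1 := Matrix.nonsing_inv_mul _ (isUnit_iff_ne_zero.2 hdetA)
  -- symmetry of the Laplacians
  have hLT : (lapl c)ᵀ = lapl c := by
    funext u v
    show lapl c v u = lapl c u v
    by_cases h : u = v
    · subst h; rfl
    · simp [lapl, h, Ne.symm h, hsymm v u]
  have hKT : (contractLapl c C D)ᵀ = contractLapl c C D := by
    unfold contractLapl
    rw [Matrix.transpose_mul, Matrix.transpose_mul, Matrix.transpose_transpose, hLT,
      ← Matrix.mul_assoc]
  -- kernel of the contracted Laplacian consists of constants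
  have hKker : ∀ z : ({v : V // v ∉ C ∪ D}) ⊕ Bool → ℝ,
      contractLapl c C D *ᵥ z = 0 → ∀ a b, z a = z b := by
    intro z hz a b
    have hq : (fun v => z (contractMap C D v)) ⬝ᵥ
        (lapl c *ᵥ (fun v => z (contractMap C D v))) = 0 := by
      rw [← contractLapl_dot, hz, dotProduct_zero]
    obtain ⟨k, hk⟩ := hkernel _ hq
    have hval : ∀ a, z a = k := by
      rintro (⟨v, hv⟩ | b')
      · have := hk v; rwa [cm_of_notMem hv] at this
      · cases b'
        · obtain ⟨c0, hc0⟩ := hC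
          have := hk c0; rwa [cm_of_mem_C hc0] at this
        · obtain ⟨d0, hd0⟩ := hD
          have := hk d0
          rwa [cm_of_mem_D (Set.disjoint_right.1 hd hd0) hd0] at this
    rw [hval a, hval b]
  -- chi is in the range of the contracted Laplacian
  have hMP1 := hM.1
  have hPt := hM.2.2.1
  have e0 : contractLapl c C D * Mᵀ * contractLapl c C D = contractLapl c C D := by
    have h := congrArg Matrix.transpose hMP1
    rw [Matrix.transpose_mul, Matrix.transpose_mul, hKT] at h
    rw [Matrix.mul_assoc]
    exact h
  have e1 : contractLapl c C D * (contractLapl c C D * M) = contractLapl c C D := by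
    calc contractLapl c C D * (contractLapl c C D * M)
        = contractLapl c C D * (contractLapl c C D * M)ᵀ := by rw [hPt]
      _ = contractLapl c C D * (Mᵀ * (contractLapl c C D)ᵀ) := by rw [Matrix.transpose_mul]
      _ = contractLapl c C D * Mᵀ * contractLapl c C D := by rw [hKT, Matrix.mul_assoc]
      _ = contractLapl c C D := e0
  set N : Matrix (({v : V // v ∉ C ∪ D}) ⊕ Bool) (({v : V // v ∉ C ∪ D}) ⊕ Bool) ℝ :=
    (1 : Matrix _ _ ℝ) - contractLapl c C D * M with hNdef
  have hNt : Nᵀ = N := by rw [hNdef, Matrix.transpose_sub, Matrix.transpose_one, hPt]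
  have hKN : contractLapl c C D * N = 0 := by
    rw [hNdef, Matrix.mul_sub, Matrix.mul_one, e1, sub_self]
  have hrowsN : ∀ a b b', N a b = N a b' := by
    intro a b b'
    have h0 : contractLapl c C D *ᵥ (fun b => N a b) = 0 := by
      funext e
      have h1 : (contractLapl c C D * Nᵀ) e a = (0 : Matrix _ _ ℝ) e a := by rw [hNt, hKN]
      simpa [Matrix.mul_apply, Matrix.mulVec, dotProduct,
        Matrix.transpose_apply] using h1
    exact hKker _ h0 b b'
  have hchisum : ∑ b, chi b = 0 := by
    simp [hchi, Fintype.sum_sum_type, Fintype.sum_bool]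
  have hx : contractLapl c C D *ᵥ (M *ᵥ chi) = chi := by
    funext a
    have h1 : (contractLapl c C D *ᵥ (M *ᵥ chi)) a = ((contractLapl c C D * M) *ᵥ chi) a := by
      rw [Matrix.mulVec_mulVec]
    have h2 : (N *ᵥ chi) a = 0 := by
      have e2 : (N *ᵥ chi) a = ∑ b, N a b * chi b := rfl
      rw [e2]
      calc ∑ b, N a b * chi b = ∑ b, N a a * chi b :=
            Finset.sum_congr rfl fun b _ => by rw [hrowsN a b a]
        _ = N a a * ∑ b, chi b := by rw [Finset.mul_sum]
        _ = 0 := by rw [hchisum, mul_zero]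
    have e3 : (N *ᵥ chi) a = chi a - ((contractLapl c C D * M) *ᵥ chi) a := by
      rw [hNdef, Matrix.sub_mulVec, Matrix.one_mulVec, Pi.sub_apply]
    rw [e3] at h2
    rw [h1]
    linarith
  set x : ({v : V // v ∉ C ∪ D}) ⊕ Bool → ℝ := M *ᵥ chi with hxdef
  set y : V → ℝ := fun v => x (contractMap C D v) with hydef
  -- the master equation
  have hLy : ∀ a, (∑ u, (if contractMap C D u = a then (1:ℝ) else 0) * ((lapl c *ᵥ y) u))
      = chi a := by
    intro a
    have h1 := congrFun hx a
    rw [contractLapl_mulVec c C D x] at h1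
    rw [← hydef] at h1
    exact h1
  have eq1 : ∀ i : {v : V // v ∉ C ∪ D}, (lapl c *ᵥ y) i.1 = 0 := by
    intro i
    have h1 := hLy (Sum.inl i)
    have h2 : chi (Sum.inl i) = 0 := by simp [hchi]
    rw [h2] at h1
    simp only [cm_eq_inl_iff, ite_mul, one_mul, zero_mul, Finset.sum_ite_eq',
      Finset.mem_univ, if_true] at h1
    exact h1
  have eq2 : ∑ i : ↥(C ∪ D), (if i.1 ∈ C then (1:ℝ) else 0) * ((lapl c *ᵥ y) i.1) = 1 := by
    have h1 := hLy (Sum.inr false)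
    have h2 : chi (Sum.inr false) = 1 := by simp [hchi]
    rw [h2] at h1
    simp only [cm_eq_false_iff] at h1
    rw [sum_split (C ∪ D)] at h1
    beta_reduce at h1
    have h3 : ∑ k : {v : V // v ∉ C ∪ D},
        (if k.1 ∈ C then (1:ℝ) else 0) * ((lapl c *ᵥ y) k.1) = 0 :=
      Finset.sum_eq_zero fun k _ => by
        rw [if_neg (fun hc => k.2 (Set.mem_union_left _ hc)), zero_mul]
    rw [h3, add_zero] at h1
    exact h1
  -- solve for the interior values
  set xo : {v : V // v ∉ C ∪ D} → ℝ := fun k => x (Sum.inl k) with hxodef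
  set g : {v : V // v ∉ C ∪ D} → ℝ :=
    fun l => ∑ j : ↥(C ∪ D), lapl c l.1 j.1 * y j.1 with hgdef
  have hyW : ∀ k : {v : V // v ∉ C ∪ D}, y k.1 = xo k :=
    fun k => congrArg x (cm_of_notMem k.2)
  have hAxo : A *ᵥ xo = -g := by
    funext i
    have h1 := eq1 i
    have e0 : (lapl c *ᵥ y) i.1 = ∑ v, lapl c i.1 v * y v := rfl
    rw [e0, sum_split (C ∪ D)] at h1
    beta_reduce at h1
    have h2 : ∑ k : {v : V // v ∉ C ∪ D}, lapl c i.1 k.1 * y k.1 = (A *ᵥ xo) i :=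
      Finset.sum_congr rfl fun k _ => by rw [hyW k]; rfl
    rw [h2] at h1
    have hgi : g i = ∑ j : ↥(C ∪ D), lapl c i.1 j.1 * y j.1 := rfl
    have : (A *ᵥ xo) i = -(g i) := by rw [hgi]; linarith
    simpa using this
  have hxo : xo = -(A⁻¹ *ᵥ g) := by
    have h1 : A⁻¹ *ᵥ (A *ᵥ xo) = xo := by
      rw [Matrix.mulVec_mulVec, hAl, Matrix.one_mulVec]
    rw [← h1, hAxo, Matrix.mulVec_neg]
  -- the key formula for L y on the boundary
  have key : ∀ u : V, (lapl c *ᵥ y) u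
      = ∑ j : ↥(C ∪ D), (lapl c u j.1
          - ∑ l : {v : V // v ∉ C ∪ D},
              (∑ k : {v : V // v ∉ C ∪ D}, lapl c u k.1 * A⁻¹ k l) * lapl c l.1 j.1)
            * y j.1 := by
    intro u
    have e0 : (lapl c *ᵥ y) u = ∑ v, lapl c u v * y v := rfl
    rw [e0, sum_split (C ∪ D)]
    beta_reduce
    have h2 : ∑ k : {v : V // v ∉ C ∪ D}, lapl c u k.1 * y k.1
        = -∑ l : {v : V // v ∉ C ∪ D},
            (∑ k : {v : V // v ∉ C ∪ D}, lapl c u k.1 * A⁻¹ k l) * g l := by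
      calc ∑ k : {v : V // v ∉ C ∪ D}, lapl c u k.1 * y k.1
          = ∑ k : {v : V // v ∉ C ∪ D}, lapl c u k.1 * xo k :=
            Finset.sum_congr rfl fun k _ => by rw [hyW k]
        _ = ∑ k : {v : V // v ∉ C ∪ D}, lapl c u k.1 * (-(A⁻¹ *ᵥ g) k) := by
            rw [hxo]; exact Finset.sum_congr rfl fun k _ => by simp
        _ = -∑ k : {v : V // v ∉ C ∪ D}, lapl c u k.1 * (A⁻¹ *ᵥ g) k := by
            rw [← Finset.sum_neg_distrib]
            exact Finset.sum_congr rfl fun k _ => by simp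
        _ = -∑ k : {v : V // v ∉ C ∪ D}, ∑ l : {v : V // v ∉ C ∪ D},
              lapl c u k.1 * (A⁻¹ k l * g l) := by
            congr 1
            exact Finset.sum_congr rfl fun k _ => by
              rw [show (A⁻¹ *ᵥ g) k = ∑ l, A⁻¹ k l * g l from rfl, Finset.mul_sum]
        _ = -∑ l : {v : V // v ∉ C ∪ D}, ∑ k : {v : V // v ∉ C ∪ D},
              lapl c u k.1 * (A⁻¹ k l * g l) := by rw [Finset.sum_comm]
        _ = -∑ l : {v : V // v ∉ C ∪ D},
              (∑ k : {v : V // v ∉ C ∪ D}, lapl c u k.1 * A⁻¹ k l) * g l := by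
            congr 1
            exact Finset.sum_congr rfl fun l _ => by
              rw [Finset.sum_mul]
              exact Finset.sum_congr rfl fun k _ => by ring
    rw [h2]
    have h3 : ∑ l : {v : V // v ∉ C ∪ D},
        (∑ k : {v : V // v ∉ C ∪ D}, lapl c u k.1 * A⁻¹ k l) * g l
        = ∑ j : ↥(C ∪ D), (∑ l : {v : V // v ∉ C ∪ D},
            (∑ k : {v : V // v ∉ C ∪ D}, lapl c u k.1 * A⁻¹ k l) * lapl c l.1 j.1) * y j.1 := by
      calc ∑ l : {v : V // v ∉ C ∪ D},
            (∑ k : {v : V // v ∉ C ∪ D}, lapl c u k.1 * A⁻¹ k l) * g l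
          = ∑ l : {v : V // v ∉ C ∪ D}, ∑ j : ↥(C ∪ D),
              (∑ k : {v : V // v ∉ C ∪ D}, lapl c u k.1 * A⁻¹ k l)
                * (lapl c l.1 j.1 * y j.1) :=
            Finset.sum_congr rfl fun l _ => by
              rw [show g l = ∑ j : ↥(C ∪ D), lapl c l.1 j.1 * y j.1 from rfl, Finset.mul_sum]
        _ = ∑ j : ↥(C ∪ D), ∑ l : {v : V // v ∉ C ∪ D},
              (∑ k : {v : V // v ∉ C ∪ D}, lapl c u k.1 * A⁻¹ k l)
                * (lapl c l.1 j.1 * y j.1) := Finset.sum_comm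
        _ = ∑ j : ↥(C ∪ D), (∑ l : {v : V // v ∉ C ∪ D},
              (∑ k : {v : V // v ∉ C ∪ D}, lapl c u k.1 * A⁻¹ k l) * lapl c l.1 j.1)
                * y j.1 :=
            Finset.sum_congr rfl fun j _ => by
              rw [Finset.sum_mul]
              exact Finset.sum_congr rfl fun l _ => by ring
    rw [h3, ← sub_eq_add_neg, ← Finset.sum_sub_distrib]
    exact Finset.sum_congr rfl fun j _ => by ring
  -- row sums of the Schur complement vanish
  have hrowS : ∀ u : V, ∑ j : ↥(C ∪ D), (lapl c u j.1
      - ∑ l : {v : V // v ∉ C ∪ D},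
          (∑ k : {v : V // v ∉ C ∪ D}, lapl c u k.1 * A⁻¹ k l) * lapl c l.1 j.1) = 0 := by
    intro u
    rw [Finset.sum_sub_distrib]
    have hUrow : ∀ w : V, ∑ j : ↥(C ∪ D), lapl c w j.1
        = -∑ k : {v : V // v ∉ C ∪ D}, lapl c w k.1 := by
      intro w
      have h0 := lapl_rowsum c hdiag w
      rw [sum_split (C ∪ D)] at h0
      beta_reduce at h0
      linarith
    have hswap : ∑ j : ↥(C ∪ D), ∑ l : {v : V // v ∉ C ∪ D},
        (∑ k : {v : V // v ∉ C ∪ D}, lapl c u k.1 * A⁻¹ k l) * lapl c l.1 j.1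
        = ∑ l : {v : V // v ∉ C ∪ D},
            (∑ k : {v : V // v ∉ C ∪ D}, lapl c u k.1 * A⁻¹ k l)
              * ∑ j : ↥(C ∪ D), lapl c l.1 j.1 := by
      rw [Finset.sum_comm]
      exact Finset.sum_congr rfl fun l _ => (Finset.mul_sum _ _ _).symm
    rw [hswap]
    have h2 : ∑ l : {v : V // v ∉ C ∪ D},
        (∑ k : {v : V // v ∉ C ∪ D}, lapl c u k.1 * A⁻¹ k l)
          * ∑ j : ↥(C ∪ D), lapl c l.1 j.1
        = -∑ l : {v : V // v ∉ C ∪ D},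
            (∑ k : {v : V // v ∉ C ∪ D}, lapl c u k.1 * A⁻¹ k l)
              * (A *ᵥ (fun _ => (1:ℝ))) l := by
      rw [← Finset.sum_neg_distrib]
      refine Finset.sum_congr rfl fun l _ => ?_
      rw [hUrow l.1]
      have e4 : (A *ᵥ (fun _ => (1:ℝ))) l = ∑ m : {v : V // v ∉ C ∪ D}, lapl c l.1 m.1 := by
        simp [Matrix.mulVec, dotProduct, hAdef]
      rw [e4]; ring
    have h3 : ∑ l : {v : V // v ∉ C ∪ D},
        (∑ k : {v : V // v ∉ C ∪ D}, lapl c u k.1 * A⁻¹ k l)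
          * (A *ᵥ (fun _ => (1:ℝ))) l
        = ∑ k : {v : V // v ∉ C ∪ D}, lapl c u k.1 := by
      calc ∑ l : {v : V // v ∉ C ∪ D},
            (∑ k : {v : V // v ∉ C ∪ D}, lapl c u k.1 * A⁻¹ k l)
              * (A *ᵥ (fun _ => (1:ℝ))) l
          = ((fun k : {v : V // v ∉ C ∪ D} => lapl c u k.1) ᵥ* A⁻¹)
              ⬝ᵥ (A *ᵥ (fun _ => (1:ℝ))) := rfl
        _ = (((fun k : {v : V // v ∉ C ∪ D} => lapl c u k.1) ᵥ* A⁻¹) ᵥ* A)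
              ⬝ᵥ (fun _ => (1:ℝ)) := by rw [Matrix.dotProduct_mulVec]
        _ = ((fun k : {v : V // v ∉ C ∪ D} => lapl c u k.1) ᵥ* (A⁻¹ * A))
              ⬝ᵥ (fun _ => (1:ℝ)) := by rw [Matrix.vecMul_vecMul]
        _ = (fun k : {v : V // v ∉ C ∪ D} => lapl c u k.1) ⬝ᵥ (fun _ => (1:ℝ)) := by
              rw [hAl, Matrix.vecMul_one]
        _ = ∑ k : {v : V // v ∉ C ∪ D}, lapl c u k.1 := by
              simp [dotProduct]
    rw [h2, h3, hUrow u]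
    ring
  -- values of y on the boundary
  have hyval : ∀ j : ↥(C ∪ D), y j.1
      = x (Sum.inr false) + (x (Sum.inr true) - x (Sum.inr false))
          * (if j.1 ∈ D then 1 else 0) := by
    intro j
    by_cases hj : j.1 ∈ D
    · have hyj : y j.1 = x (Sum.inr true) :=
        congrArg x (cm_of_mem_D (Set.disjoint_right.1 hd hj) hj)
      rw [hyj, if_pos hj]; ring
    · have hjC : j.1 ∈ C := j.2.elim id fun h => absurd h hj
      have hyj : y j.1 = x (Sum.inr false) := congrArg x (cm_of_mem_C hjC)
      rw [hyj, if_neg hj]; ring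
  -- the inner sum
  have hinner2 : ∀ i : ↥(C ∪ D), (lapl c *ᵥ y) i.1
      = (x (Sum.inr true) - x (Sum.inr false))
          * ∑ j : ↥(C ∪ D), (if j.1 ∈ D then (1:ℝ) else 0)
              * (lapl c i.1 j.1 - ∑ l : {v : V // v ∉ C ∪ D},
                  (∑ k : {v : V // v ∉ C ∪ D}, lapl c i.1 k.1 * A⁻¹ k l)
                    * lapl c l.1 j.1) := by
    intro i
    rw [key i.1]
    calc ∑ j : ↥(C ∪ D), (lapl c i.1 j.1 - ∑ l : {v : V // v ∉ C ∪ D},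
            (∑ k : {v : V // v ∉ C ∪ D}, lapl c i.1 k.1 * A⁻¹ k l) * lapl c l.1 j.1)
              * y j.1
        = ∑ j : ↥(C ∪ D), (x (Sum.inr false) * (lapl c i.1 j.1
            - ∑ l : {v : V // v ∉ C ∪ D},
                (∑ k : {v : V // v ∉ C ∪ D}, lapl c i.1 k.1 * A⁻¹ k l) * lapl c l.1 j.1)
          + (x (Sum.inr true) - x (Sum.inr false)) * ((if j.1 ∈ D then (1:ℝ) else 0)
            * (lapl c i.1 j.1 - ∑ l : {v : V // v ∉ C ∪ D},
                (∑ k : {v : V // v ∉ C ∪ D}, lapl c i.1 k.1 * A⁻¹ k l)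
                  * lapl c l.1 j.1))) :=
          Finset.sum_congr rfl fun j _ => by rw [hyval j]; ring
      _ = x (Sum.inr false) * ∑ j : ↥(C ∪ D), (lapl c i.1 j.1
            - ∑ l : {v : V // v ∉ C ∪ D},
                (∑ k : {v : V // v ∉ C ∪ D}, lapl c i.1 k.1 * A⁻¹ k l) * lapl c l.1 j.1)
          + (x (Sum.inr true) - x (Sum.inr false))
            * ∑ j : ↥(C ∪ D), (if j.1 ∈ D then (1:ℝ) else 0)
              * (lapl c i.1 j.1 - ∑ l : {v : V // v ∉ C ∪ D},
                  (∑ k : {v : V // v ∉ C ∪ D}, lapl c i.1 k.1 * A⁻¹ k l)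
                    * lapl c l.1 j.1) := by
          rw [Finset.sum_add_distrib, ← Finset.mul_sum, ← Finset.mul_sum]
      _ = (x (Sum.inr true) - x (Sum.inr false))
            * ∑ j : ↥(C ∪ D), (if j.1 ∈ D then (1:ℝ) else 0)
              * (lapl c i.1 j.1 - ∑ l : {v : V // v ∉ C ∪ D},
                  (∑ k : {v : V // v ∉ C ∪ D}, lapl c i.1 k.1 * A⁻¹ k l)
                    * lapl c l.1 j.1) := by
          rw [hrowS i.1, mul_zero, zero_add]
  -- the main identity
  have hmain : (x (Sum.inr true) - x (Sum.inr false))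
      * (∑ i : ↥(C ∪ D), ∑ j : ↥(C ∪ D), (if i.1 ∈ C then (1:ℝ) else 0)
          * ((if j.1 ∈ D then (1:ℝ) else 0)
            * (lapl c i.1 j.1 - ∑ l : {v : V // v ∉ C ∪ D},
                (∑ k : {v : V // v ∉ C ∪ D}, lapl c i.1 k.1 * A⁻¹ k l)
                  * lapl c l.1 j.1))) = 1 := by
    have hstep : (x (Sum.inr true) - x (Sum.inr false))
        * (∑ i : ↥(C ∪ D), ∑ j : ↥(C ∪ D), (if i.1 ∈ C then (1:ℝ) else 0)
            * ((if j.1 ∈ D then (1:ℝ) else 0)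
              * (lapl c i.1 j.1 - ∑ l : {v : V // v ∉ C ∪ D},
                  (∑ k : {v : V // v ∉ C ∪ D}, lapl c i.1 k.1 * A⁻¹ k l)
                    * lapl c l.1 j.1)))
        = ∑ i : ↥(C ∪ D), (if i.1 ∈ C then (1:ℝ) else 0) * ((lapl c *ᵥ y) i.1) := by
      rw [Finset.mul_sum]
      refine Finset.sum_congr rfl fun i _ => ?_
      rw [hinner2 i, ← Finset.mul_sum]
      ring
    rw [hstep, eq2]
  -- the Schur complement formula
  have hSfor : ∀ i j : ↥(C ∪ D), schur (lapl c) (C ∪ D) i j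
      = lapl c i.1 j.1 - ∑ l : {v : V // v ∉ C ∪ D},
          (∑ k : {v : V // v ∉ C ∪ D}, lapl c i.1 k.1 * A⁻¹ k l) * lapl c l.1 j.1 := by
    intro i j
    simp only [schur, Matrix.sub_apply, Matrix.of_apply, Matrix.mul_apply, hAdef]
    congr!
  -- conclude
  have hdot : chi ⬝ᵥ x = x (Sum.inr false) - x (Sum.inr true) := by
    have e0 : chi ⬝ᵥ x = ∑ a, chi a * x a := rfl
    rw [e0, Fintype.sum_sum_type]
    have h1 : ∀ a : {v : V // v ∉ C ∪ D}, chi (Sum.inl a) * x (Sum.inl a) = 0 := by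
      intro a; simp [hchi]
    rw [Finset.sum_eq_zero fun a _ => h1 a, Fintype.sum_bool, zero_add]
    have h2 : chi (Sum.inr true) = -1 := by simp [hchi]
    have h3 : chi (Sum.inr false) = 1 := by simp [hchi]
    rw [h2, h3]; ring
  rw [show chi ⬝ᵥ (M *ᵥ chi) = chi ⬝ᵥ x from rfl, hdot]
  refine eq_inv_of_mul_eq_one_left ?_
  have hS0 : (∑ i : ↥(C ∪ D), ∑ j : ↥(C ∪ D),
      if i.1 ∈ C ∧ j.1 ∈ D then -(schur (lapl c) (C ∪ D) i j) else 0)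
      = -(∑ i : ↥(C ∪ D), ∑ j : ↥(C ∪ D), (if i.1 ∈ C then (1:ℝ) else 0)
          * ((if j.1 ∈ D then (1:ℝ) else 0)
            * (lapl c i.1 j.1 - ∑ l : {v : V // v ∉ C ∪ D},
                (∑ k : {v : V // v ∉ C ∪ D}, lapl c i.1 k.1 * A⁻¹ k l)
                  * lapl c l.1 j.1))) := by
    rw [← Finset.sum_neg_distrib]
    refine Finset.sum_congr rfl fun i _ => ?_
    rw [← Finset.sum_neg_distrib]
    refine Finset.sum_congr rfl fun j _ => ?_
    rw [hSfor i j]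
    by_cases h1 : i.1 ∈ C <;> by_cases h2 : j.1 ∈ D <;> simp [h1, h2]
  rw [hS0]
  calc (-(∑ i : ↥(C ∪ D), ∑ j : ↥(C ∪ D), (if i.1 ∈ C then (1:ℝ) else 0)
          * ((if j.1 ∈ D then (1:ℝ) else 0)
            * (lapl c i.1 j.1 - ∑ l : {v : V // v ∉ C ∪ D},
                (∑ k : {v : V // v ∉ C ∪ D}, lapl c i.1 k.1 * A⁻¹ k l)
                  * lapl c l.1 j.1))))
      * (x (Sum.inr false) - x (Sum.inr true))
      = (x (Sum.inr true) - x (Sum.inr false))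
        * (∑ i : ↥(C ∪ D), ∑ j : ↥(C ∪ D), (if i.1 ∈ C then (1:ℝ) else 0)
          * ((if j.1 ∈ D then (1:ℝ) else 0)
            * (lapl c i.1 j.1 - ∑ l : {v : V // v ∉ C ∪ D},
                (∑ k : {v : V // v ∉ C ∪ D}, lapl c i.1 k.1 * A⁻¹ k l)
                  * lapl c l.1 j.1))) := by ring
    _ = 1 := hmain
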